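/- arXiv:1102.3020 — 2 statements merged into one kernel-verified Lean document; each statement's English description precedes it below -/
import Mathlib

section
/- Let (Ω, ℱ, P) be a probability space equipped with a filtration (ℱ_n)_{n∈ℕ}, let D be an event measurable with respect to the σ-algebra ⨆_n ℱ_n generated by the union of the ℱ_n, and let L : [0,∞) → ℝ be a nonincreasing function with 0 < L(t) ≤ 1 for all t ≥ 0. For each n let X_n : Ω → ℕ and Y_n : Ω → [0,∞) be ℱ_n-measurable random variables such that L(Y_n)^{X_n} ≤ P(D | ℱ_n) holds almost surely. Then X_n + Y_n → ∞ almost surely on the complement of D. -/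
open MeasureTheory Filter

/-- If `D` is measurable with respect to `⨆ n, ℱ n`, `L : [0,∞) → ℝ` is nonincreasing with
`0 < L ≤ 1`, `X n` (ℕ-valued) and `Y n` (nonnegative real-valued) are `ℱ n`-measurable with
`L(Y n) ^ (X n) ≤ P(D | ℱ n)` a.s., then `X n + Y n → ∞` almost surely on `Dᶜ`. -/
theorem tendsto_atTop_of_laplace_pow_le_condexp
    {Ω : Type*} {m : MeasurableSpace Ω} {μ : Measure Ω} [IsProbabilityMeasure μ]
    (ℱ : Filtration ℕ m) (D : Set Ω) (hD : MeasurableSet[⨆ n, ℱ n] D)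
    (L : ℝ → ℝ) (hL : AntitoneOn L (Set.Ici 0))
    (hL0 : ∀ t, 0 ≤ t → 0 < L t) (hL1 : ∀ t, 0 ≤ t → L t ≤ 1)
    (X : ℕ → Ω → ℕ) (hX : ∀ n, Measurable[ℱ n] (X n))
    (Y : ℕ → Ω → ℝ) (hY : ∀ n, Measurable[ℱ n] (Y n)) (hY0 : ∀ n ω, 0 ≤ Y n ω)
    (hle : ∀ n, ∀ᵐ ω ∂μ,
      (L (Y n ω)) ^ (X n ω) ≤ (μ[D.indicator (fun _ => (1 : ℝ)) | ℱ n]) ω) :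
    ∀ᵐ ω ∂μ, ω ∈ Dᶜ →
      Tendsto (fun n => (X n ω : ℝ) + Y n ω) atTop atTop := by
  have hm : (⨆ n, ℱ n) ≤ m := iSup_le fun n => ℱ.le n
  have hDm : MeasurableSet D := hm _ hD
  have hlevy := tendsto_ae_condExp (ℱ := ℱ) (μ := μ) (D.indicator (fun _ => (1 : ℝ)))
  have hcond : μ[D.indicator (fun _ => (1 : ℝ)) | ⨆ n, ℱ n]
      = D.indicator (fun _ => (1 : ℝ)) :=
    condExp_of_stronglyMeasurable hm (stronglyMeasurable_const.indicator hD)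
      ((integrable_const 1).indicator hDm)
  have hle' := ae_all_iff.mpr hle
  rw [hcond] at hlevy
  filter_upwards [hlevy, hle'] with ω hω hleω hωD
  rw [Set.indicator_of_notMem hωD] at hω
  -- hω : Tendsto (fun n => condexp ... ω) atTop (𝓝 0)
  rw [tendsto_atTop]
  intro b
  set c : ℝ := max b 0 with hc
  have hc0 : 0 ≤ c := le_max_right _ _
  have hε : 0 < L c ^ (⌈c⌉₊) := pow_pos (hL0 c hc0) _
  filter_upwards [hω.eventually_lt_const hε] with n hn
  by_contra hcon
  push_neg at hcon
  have hlt : (X n ω : ℝ) + Y n ω < c := lt_of_lt_of_le hcon (le_max_left _ _)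
  have hYc : Y n ω ≤ c := le_trans (le_add_of_nonneg_left (Nat.cast_nonneg _)) hlt.le
  have hXc : (X n ω : ℝ) ≤ c := le_trans (le_add_of_nonneg_right (hY0 n ω)) hlt.le
  have hXn : X n ω ≤ ⌈c⌉₊ := by
    exact_mod_cast hXc.trans (Nat.le_ceil c)
  have h1 : L c ≤ L (Y n ω) := hL (hY0 n ω) hc0 hYc
  have h2 : L c ^ (⌈c⌉₊) ≤ L c ^ (X n ω) :=
    pow_le_pow_of_le_one (hL0 c hc0).le (hL1 c hc0) hXn
  have h3 : L c ^ (X n ω) ≤ L (Y n ω) ^ (X n ω) :=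
    pow_le_pow_left₀ (hL0 c hc0).le h1 _
  exact absurd (le_trans (h2.trans h3) (hleω n)) (not_le.mpr hn)
end

section
/- Let k be a positive integer and let S ⊆ [0,∞) be a Lebesgue-measurable set with Lebesgue measure at least 2k. Then there exist measurable sets D_1, …, D_k ⊆ S such that each D_i has Lebesgue measure exactly 1 and such that for all 1 ≤ i < j ≤ k, every x ∈ D_i and y ∈ D_j satisfy y − x ≥ 1 (in particular, the distance between any two of the sets is at least 1). -/
open MeasureTheory
open scoped ENNReal

private lemma aux_extract (S : Set ℝ) (hS : MeasurableSet S) :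
    ∀ n : ℕ, ∀ a : ℝ, (2 * n : ℝ≥0∞) ≤ volume (S ∩ Set.Ioi a) →
    ∃ D : Fin n → Set ℝ,
      (∀ i, D i ⊆ S ∩ Set.Ioi a ∧ MeasurableSet (D i) ∧ volume (D i) = 1) ∧
      (∀ i j : Fin n, i < j → ∀ x ∈ D i, ∀ y ∈ D j, 1 ≤ y - x) := by
  intro n
  induction n with
  | zero =>
      intro a _
      exact ⟨fun i => ∅, fun i => i.elim0, fun i => i.elim0⟩
  | succ n ih =>
      intro a h
      have hfin : ∀ t, volume (S ∩ Set.Ioc a t) ≠ ⊤ := by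
        intro t
        exact ne_top_of_le_ne_top (by simp [Real.volume_Ioc]) (measure_mono Set.inter_subset_right)
      -- step 1: 2 ≤ remaining measure
      have h2 : (2 : ℝ≥0∞) ≤ volume (S ∩ Set.Ioi a) := by
        refine le_trans ?_ h
        have : (1:ℝ≥0∞) ≤ (n+1 : ℕ) := by exact_mod_cast Nat.one_le_iff_ne_zero.mpr (Nat.succ_ne_zero n)
        calc (2:ℝ≥0∞) = 2 * 1 := by ring
          _ ≤ 2 * (n+1 : ℕ) := by gcongr
      -- step 2: find T with measure of S ∩ Ioc a T > 3/2
      have hunion : S ∩ Set.Ioi a = ⋃ m : ℕ, S ∩ Set.Ioc a (a + m) := by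
        ext x
        simp only [Set.mem_inter_iff, Set.mem_iUnion, Set.mem_Ioi, Set.mem_Ioc]
        constructor
        · rintro ⟨hxS, hxa⟩
          refine ⟨Nat.ceil (x - a), hxS, hxa, ?_⟩
          have := Nat.le_ceil (x - a); linarith
        · rintro ⟨m, hxS, hxa, _⟩
          exact ⟨hxS, hxa⟩
      have hmono : Monotone (fun m : ℕ => S ∩ Set.Ioc a (a + m)) := by
        intro m m' hmm'
        refine Set.inter_subset_inter_right _ (Set.Ioc_subset_Ioc le_rfl ?_)
        have : (m:ℝ) ≤ m' := by exact_mod_cast hmm'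
        linarith
      have hsup : volume (S ∩ Set.Ioi a) = ⨆ m : ℕ, volume (S ∩ Set.Ioc a (a + m)) := by
        rw [hunion]
        exact hmono.measure_iUnion
      obtain ⟨m, hm⟩ : ∃ m : ℕ, (1 : ℝ≥0∞) < volume (S ∩ Set.Ioc a (a + m)) := by
        have : (1 : ℝ≥0∞) < ⨆ m : ℕ, volume (S ∩ Set.Ioc a (a + m)) := by
          rw [← hsup]
          exact lt_of_lt_of_le (by norm_num : (1:ℝ≥0∞) < 2) h2
        exact lt_iSup_iff.mp this
      set T : ℝ := a + m with hT
      have haT : a ≤ T := le_add_of_nonneg_right m.cast_nonneg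
      -- step 3: g continuous
      set g : ℝ → ℝ := fun t => (volume (S ∩ Set.Ioc a t)).toReal with hg
      have hgmono : ∀ s t : ℝ, s ≤ t → g s ≤ g t ∧ g t ≤ g s + (t - s) := by
        intro s t hst
        constructor
        · exact ENNReal.toReal_mono (hfin t)
            (measure_mono (Set.inter_subset_inter_right _ (Set.Ioc_subset_Ioc le_rfl hst)))
        · have hsub : S ∩ Set.Ioc a t ⊆ (S ∩ Set.Ioc a s) ∪ Set.Ioc s t := by
            rintro x ⟨hxS, hxa, hxt⟩
            rcases le_or_gt x s with hxs | hxs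
            · exact Or.inl ⟨hxS, hxa, hxs⟩
            · exact Or.inr ⟨hxs, hxt⟩
          have h2 := (measure_mono (μ := volume) hsub).trans (measure_union_le _ _)
          have h3 : volume (S ∩ Set.Ioc a t) ≤ volume (S ∩ Set.Ioc a s) + ENNReal.ofReal (t - s) := by
            simpa [Real.volume_Ioc] using h2
          have h4 := ENNReal.toReal_mono (by
            exact ENNReal.add_ne_top.mpr ⟨hfin s, ENNReal.ofReal_ne_top⟩) h3
          rw [ENNReal.toReal_add (hfin s) ENNReal.ofReal_ne_top,
            ENNReal.toReal_ofReal (by linarith)] at h4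
          exact h4
      have hgcont : Continuous g := by
        refine (LipschitzWith.of_dist_le_mul (K := 1) (f := g) ?_).continuous
        intro s t
        rcases le_total s t with hst | hts
        · have := hgmono s t hst
          rw [Real.dist_eq, Real.dist_eq, abs_of_nonpos (by linarith [this.1]), abs_of_nonpos (by linarith)]
          push_cast; linarith [this.2]
        · have := hgmono t s hts
          rw [Real.dist_eq, Real.dist_eq, abs_of_nonneg (by linarith [this.1]), abs_of_nonneg (by linarith)]
          push_cast; linarith [this.2]
      have hga : g a = 0 := by simp [hg]
      have hgT : (1:ℝ) ≤ g T := by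
        have := (ENNReal.toReal_lt_toReal ENNReal.one_ne_top (hfin T)).mpr hm
        simp only [ENNReal.toReal_one] at this
        simp only [hg]; linarith
      -- step 4: IVT
      obtain ⟨b, hbmem, hgb⟩ : ∃ b ∈ Set.Icc a T, g b = 1 := by
        have := intermediate_value_Icc haT hgcont.continuousOn
        have h1 : (1:ℝ) ∈ Set.Icc (g a) (g T) := ⟨by rw [hga]; norm_num, hgT⟩
        obtain ⟨b, hb, hgb⟩ := this h1
        exact ⟨b, hb, hgb⟩
      have hvolb : volume (S ∩ Set.Ioc a b) = 1 := by
        have := (ENNReal.toReal_eq_toReal_iff' (hfin b) (by norm_num : (1:ℝ≥0∞) ≠ ⊤)).mp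
        simp only [ENNReal.toReal_one] at this
        exact this hgb
      -- step 5: D0
      set D0 : Set ℝ := S ∩ Set.Ioc a b with hD0
      have hD0meas : MeasurableSet D0 := hS.inter measurableSet_Ioc
      have hD0sub : D0 ⊆ S ∩ Set.Ioi a :=
        Set.inter_subset_inter_right _ Set.Ioc_subset_Ioi_self
      -- step 6: remaining measure
      have hrem : (2 * n : ℝ≥0∞) ≤ volume (S ∩ Set.Ioi (b + 1)) := by
        have hsub : S ∩ Set.Ioi a ⊆ D0 ∪ ((S ∩ Set.Ioc b (b+1)) ∪ (S ∩ Set.Ioi (b+1))) := by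
          rintro x ⟨hxS, hxa⟩
          rcases le_or_gt x b with hxb | hxb
          · exact Or.inl ⟨hxS, hxa, hxb⟩
          · rcases le_or_gt x (b+1) with hxb1 | hxb1
            · exact Or.inr (Or.inl ⟨hxS, hxb, hxb1⟩)
            · exact Or.inr (Or.inr ⟨hxS, hxb1⟩)
        have hle : volume (S ∩ Set.Ioi a) ≤
            volume D0 + (volume (S ∩ Set.Ioc b (b+1)) + volume (S ∩ Set.Ioi (b+1))) :=
          (measure_mono hsub).trans ((measure_union_le _ _).trans (by
            gcongr; exact measure_union_le _ _))
        have hgap : volume (S ∩ Set.Ioc b (b+1)) ≤ 1 := by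
          refine (measure_mono Set.inter_subset_right).trans ?_
          simp [Real.volume_Ioc]
        have hchain : 2 * ((n:ℝ≥0∞) + 1) ≤ 2 + volume (S ∩ Set.Ioi (b+1)) := by
          calc 2 * ((n:ℝ≥0∞) + 1) ≤ volume (S ∩ Set.Ioi a) := by
                refine le_trans (le_of_eq ?_) h
                push_cast; ring
            _ ≤ volume D0 + (volume (S ∩ Set.Ioc b (b+1)) + volume (S ∩ Set.Ioi (b+1))) := hle
            _ ≤ 1 + (1 + volume (S ∩ Set.Ioi (b+1))) := by
                gcongr
                exact le_of_eq hvolb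
            _ = 2 + volume (S ∩ Set.Ioi (b+1)) := by ring
        have : 2 + 2 * (n:ℝ≥0∞) ≤ 2 + volume (S ∩ Set.Ioi (b+1)) := by
          refine le_trans (le_of_eq ?_) hchain; ring
        exact (ENNReal.add_le_add_iff_left (by norm_num : (2:ℝ≥0∞) ≠ ⊤)).mp this
      -- step 7: IH
      obtain ⟨D', hD'1, hD'2⟩ := ih (b + 1) hrem
      -- step 8: combine
      refine ⟨Fin.cons D0 D', ?_, ?_⟩
      · intro i
        rcases Fin.eq_zero_or_eq_succ i with rfl | ⟨i', rfl⟩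
        · simp only [Fin.cons_zero]
          exact ⟨hD0sub, hD0meas, hvolb⟩
        · simp only [Fin.cons_succ]
          refine ⟨(hD'1 i').1.trans ?_, (hD'1 i').2.1, (hD'1 i').2.2⟩
          refine Set.inter_subset_inter_right _ (Set.Ioi_subset_Ioi ?_)
          linarith [hbmem.1]
      · intro i j hij x hx y hy
        have hjne : j ≠ 0 := by
          rintro rfl
          exact absurd hij (by simp)
        obtain ⟨j', rfl⟩ := Fin.eq_succ_of_ne_zero hjne
        simp only [Fin.cons_succ] at hy
        have hy1 : y ∈ S ∩ Set.Ioi (b+1) := (hD'1 j').1 hy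
        rcases Fin.eq_zero_or_eq_succ i with rfl | ⟨i', rfl⟩
        · simp only [Fin.cons_zero] at hx
          have hxb : x ≤ b := hx.2.2
          have hyb : b + 1 < y := hy1.2
          linarith
        · simp only [Fin.cons_succ] at hx
          exact hD'2 i' j' (by exact_mod_cast Fin.succ_lt_succ_iff.mp hij) x hx y hy

/-- From a measurable set `S ⊆ [0,∞)` of Lebesgue measure at least `2k` one can extract
`k` measurable subsets `D_1, …, D_k` of `S`, each of Lebesgue measure exactly `1`, which are
pairwise separated: for `i < j`, every `x ∈ D_i` and `y ∈ D_j` satisfy `y − x ≥ 1`. -/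
theorem exists_separated_unit_measure_subsets
    (k : ℕ) (hk : 0 < k) (S : Set ℝ) (hS : MeasurableSet S) (hS0 : S ⊆ Set.Ici 0)
    (hvol : (2 * k : ℝ≥0∞) ≤ volume S) :
    ∃ D : Fin k → Set ℝ,
      (∀ i, D i ⊆ S ∧ MeasurableSet (D i) ∧ volume (D i) = 1) ∧
      (∀ i j : Fin k, i < j → ∀ x ∈ D i, ∀ y ∈ D j, 1 ≤ y - x) := by
  have hSsub : S ∩ Set.Ioi (-1 : ℝ) = S := by
    apply Set.inter_eq_left.mpr
    intro x hx
    have := hS0 hx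
    simp only [Set.mem_Ioi]
    simp only [Set.mem_Ici] at this
    linarith
  obtain ⟨D, hD1, hD2⟩ := aux_extract S hS k (-1) (by rw [hSsub]; exact hvol)
  exact ⟨D, fun i => ⟨((hD1 i).1).trans Set.inter_subset_left, (hD1 i).2.1, (hD1 i).2.2⟩, hD2⟩
end
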